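/- Let K ⊆ 𝔽_2^ν be a binary linear code with ν ≤ 16 such that every nonzero codeword has Hamming weight 8 or 16. Then dim K ≤ 5. Moreover, if K contains the all-ones vector of weight 16 (so ν = 16), then there is a bijection of the 16 coordinates with 𝔽_2^4 under which every codeword of K is the indicator vector of the zero set complement of an affine function; i.e., K is contained in the first-order Reed–Muller code Aff(𝔽_2^4, 𝔽_2) ⊆ 𝔽_2^{𝔽_2^4}. -/

import Mathlib

set_option linter.unnecessarySimpa false
set_option linter.unreachableTactic false
set_option linter.unusedTactic false

open Finset

namespace Stmt5Aux

abbrev V (n : ℕ) := Fin n → ZMod 2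

def sgn : ZMod 2 → ℤ := fun a => if a = 0 then 1 else -1

lemma sgn_add : ∀ a b : ZMod 2, sgn (a + b) = sgn a * sgn b := by decide

lemma sgn_zero : sgn 0 = 1 := rfl
lemma sgn_one : sgn 1 = -1 := rfl

def dot {m : ℕ} (l v : V m) : ZMod 2 := ∑ j, l j * v j

lemma dot_zero_left {m : ℕ} (v : V m) : dot (0 : V m) v = 0 := by
  simp [dot]

lemma dot_add_right {m : ℕ} (l v w : V m) : dot l (v + w) = dot l v + dot l w := by
  simp [dot, mul_add, Finset.sum_add_distrib]

lemma dot_add_left {m : ℕ} (l l' w : V m) : dot (l + l') w = dot l w + dot l' w := by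
  simp [dot, add_mul, Finset.sum_add_distrib]

lemma card_V (m : ℕ) : Fintype.card (V m) = 2 ^ m := by
  simp [Fintype.card_fun]

lemma sum_sgn_dot_zero {m : ℕ} : ∑ l : V m, sgn (dot l (0 : V m)) = 2 ^ m := by
  simp only [dot, Pi.zero_apply, mul_zero, Finset.sum_const_zero, sgn_zero]
  rw [Finset.sum_const, card_univ, card_V]
  simp

lemma sum_sgn_dot_eq_zero {m : ℕ} {w : V m} (hw : w ≠ 0) :
    ∑ l : V m, sgn (dot l w) = 0 := by
  have hx : ∃ j, w j ≠ 0 := by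
    by_contra h
    push_neg at h
    exact hw (funext fun j => h j)
  obtain ⟨j0, hj0⟩ := hx
  have hwj0 : w j0 = 1 := by
    revert hj0; generalize w j0 = x; revert x; decide
  set δ : V m := Pi.single j0 1 with hδdef
  have hδ : dot δ w = 1 := by
    rw [dot, Finset.sum_eq_single j0]
    · simp [hδdef, Pi.single_eq_same, hwj0]
    · intro b _ hb
      simp [hδdef, Pi.single_eq_of_ne hb]
    · simp
  have key : ∀ l : V m, dot (l + δ) w = dot l w + 1 := fun l => by
    rw [dot_add_left, hδ]
  have h2 : ∑ l : V m, sgn (dot l w) = ∑ l : V m, sgn (dot (l + δ) w) :=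
    (Fintype.sum_equiv (Equiv.addRight δ)
      (fun l => sgn (dot (l + δ) w)) (fun l => sgn (dot l w)) (fun l => rfl)).symm
  have h3 : ∑ l : V m, sgn (dot (l + δ) w) = -∑ l : V m, sgn (dot l w) := by
    rw [← Finset.sum_neg_distrib]
    refine Finset.sum_congr rfl fun l _ => ?_
    rw [key l, sgn_add, sgn_one]
    ring
  have := h2.trans h3
  linarith

lemma fiber_count {m : ℕ} (φ : Fin 16 → V m)
    (hbal : ∀ l : V m, l ≠ 0 → ∑ i : Fin 16, sgn (dot l (φ i)) = 0) (v : V m) :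
    (Finset.univ.filter fun i => φ i = v).card * 2 ^ m = 16 := by
  have hz : ∀ a b : ZMod 2, a + b = 0 → a = b := by decide
  have key : ∀ i : Fin 16,
      (if φ i = v then (2 ^ m : ℤ) else 0) = ∑ l : V m, sgn (dot l (φ i + v)) := by
    intro i
    by_cases h : φ i = v
    · rw [if_pos h]
      have h0 : φ i + v = 0 := by
        funext j
        have : v j + v j = 0 := by
          generalize v j = x; revert x; decide
        simp [h, this]
      rw [h0, sum_sgn_dot_zero]
    · rw [if_neg h]
      symm
      apply sum_sgn_dot_eq_zero
      intro h0
      exact h (funext fun j => hz _ _ (congrFun h0 j))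
  have lhs : ∑ i : Fin 16, (if φ i = v then (2 ^ m : ℤ) else 0)
      = ((Finset.univ.filter fun i => φ i = v).card : ℤ) * 2 ^ m := by
    rw [Finset.sum_ite, Finset.sum_const, Finset.sum_const_zero, add_zero, nsmul_eq_mul]
  have rhs : ∑ i : Fin 16, ∑ l : V m, sgn (dot l (φ i + v)) = 16 := by
    rw [Finset.sum_comm]
    have hterm : ∀ l : V m, ∑ i : Fin 16, sgn (dot l (φ i + v))
        = sgn (dot l v) * ∑ i : Fin 16, sgn (dot l (φ i)) := by
      intro l
      rw [Finset.mul_sum]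
      refine Finset.sum_congr rfl fun i _ => ?_
      rw [dot_add_right, sgn_add]
      ring
    calc ∑ l : V m, ∑ i : Fin 16, sgn (dot l (φ i + v))
        = ∑ l : V m, sgn (dot l v) * ∑ i : Fin 16, sgn (dot l (φ i)) := by
          exact Finset.sum_congr rfl fun l _ => hterm l
      _ = 16 := by
          rw [Finset.sum_eq_single (0 : V m)]
          · simp [dot_zero_left, sgn_zero]
          · intro l _ hl
            rw [hbal l hl, mul_zero]
          · intro h; exact absurd (Finset.mem_univ _) h
  have : ((Finset.univ.filter fun i => φ i = v).card : ℤ) * 2 ^ m = 16 := by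
    rw [← lhs]
    rw [Finset.sum_congr rfl fun i _ => key i]
    exact rhs
  exact_mod_cast this



lemma zmod2_add_self (a : ZMod 2) : a + a = 0 := by revert a; decide

/-- the restriction map fibers -/
lemma pi_fiber_count {m : ℕ} (hm : m ≤ 4) (v : V m) :
    (Finset.univ.filter fun x : V 4 => (fun j => x (Fin.castLE hm j)) = v).card * 2 ^ m = 16 := by
  set π : V 4 → V m := fun x j => x (Fin.castLE hm j) with hπ
  have hsur : ∀ w : V m, π (fun k => if h : (k : ℕ) < m then w ⟨k, h⟩ else 0) = w := by
    intro w; funext j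
    simp only [hπ]
    rw [dif_pos (by simpa using j.isLt : ((Fin.castLE hm j : Fin 4) : ℕ) < m)]
    congr 1
  have hcard : ∀ w : V m, (Finset.univ.filter fun x : V 4 => π x = w).card
      = (Finset.univ.filter fun x : V 4 => π x = 0).card := by
    intro w
    set x0 : V 4 := fun k => if h : (k : ℕ) < m then w ⟨k, h⟩ else 0 with hx0
    have hπx0 : π x0 = w := hsur w
    have hadd : ∀ x y : V 4, π (x + y) = π x + π y := fun x y => rfl
    apply Finset.card_bij (fun x _ => x + x0)
    · intro x hx
      simp only [Finset.mem_filter, Finset.mem_univ, true_and] at hx ⊢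
      rw [hadd, hx, hπx0]
      funext j; exact zmod2_add_self (w j)
    · intro x hx y hy hxy
      have := congrArg (· + x0) hxy
      simpa [add_assoc, funext fun k => zmod2_add_self (x0 k)] using this
    · intro y hy
      simp only [Finset.mem_filter, Finset.mem_univ, true_and] at hy
      refine ⟨y + x0, ?_, ?_⟩
      · simp only [Finset.mem_filter, Finset.mem_univ, true_and]
        rw [hadd, hy, hπx0, zero_add]
      · funext k
        show y k + x0 k + x0 k = y k
        rw [add_assoc, zmod2_add_self, add_zero]
    all_goals skip
  have htot : ∑ w : V m, (Finset.univ.filter fun x : V 4 => π x = w).card = 16 := by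
    rw [← Finset.card_eq_sum_card_fiberwise (f := π) (s := Finset.univ) (t := Finset.univ)
      (fun x _ => Finset.mem_univ _)]
    simp [card_univ, Fintype.card_fun]
  have htot2 : (Finset.univ.filter fun x : V 4 => π x = 0).card * 2 ^ m = 16 := by
    calc (Finset.univ.filter fun x : V 4 => π x = 0).card * 2 ^ m
        = ∑ _w : V m, (Finset.univ.filter fun x : V 4 => π x = 0).card := by
          rw [Finset.sum_const, card_univ]
          simp [Fintype.card_fun, mul_comm]
      _ = ∑ w : V m, (Finset.univ.filter fun x : V 4 => π x = w).card :=
          Finset.sum_congr rfl fun w _ => (hcard w).symm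
      _ = 16 := htot
  rw [hcard v]; exact htot2

/-- glue fiberwise bijections -/
lemma equiv_of_fibers {α β γ : Type*} [Fintype α] [Fintype β] [DecidableEq γ]
    (f : α → γ) (g : β → γ)
    (h : ∀ v, (Finset.univ.filter fun a => f a = v).card
        = (Finset.univ.filter fun b => g b = v).card) :
    ∃ e : α ≃ β, ∀ a, g (e a) = f a := by
  classical
  have hcard : ∀ v, Fintype.card {a // f a = v} = Fintype.card {b // g b = v} := by
    intro v
    rw [Fintype.card_subtype, Fintype.card_subtype]
    exact h v
  let fe : ∀ v, {a // f a = v} ≃ {b // g b = v} := fun v => Fintype.equivOfCardEq (hcard v)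
  refine ⟨(Equiv.sigmaFiberEquiv f).symm.trans
    ((Equiv.sigmaCongrRight fe).trans (Equiv.sigmaFiberEquiv g)), fun a => ?_⟩
  simp only [Equiv.trans_apply, Equiv.sigmaFiberEquiv, Equiv.sigmaCongrRight, Equiv.coe_fn_mk,
    Equiv.coe_fn_symm_mk]
  exact (fe (f a) ⟨a, rfl⟩).2

lemma hammingNorm_eq_card {n : ℕ} (c : Fin n → ZMod 2) :
    hammingNorm c = (Finset.univ.filter fun i => c i ≠ 0).card := rfl

lemma sum_sgn_eq_zero (c : Fin 16 → ZMod 2) (h8 : hammingNorm c = 8) :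
    ∑ i : Fin 16, sgn (c i) = 0 := by
  classical
  have hne : (Finset.univ.filter fun i => ¬ c i = 0).card = 8 := by
    simpa [hammingNorm_eq_card, Ne] using h8
  have h0 : (Finset.univ.filter fun i => c i = 0).card = 8 := by
    have := Finset.card_filter_add_card_filter_not
      (s := (Finset.univ : Finset (Fin 16))) (p := fun i => c i = 0)
    simp only [Finset.card_univ, Fintype.card_fin] at this
    omega
  have : ∑ i : Fin 16, sgn (c i) = ∑ i : Fin 16, (if c i = 0 then (1:ℤ) else -1) := rfl
  rw [this, Finset.sum_ite, Finset.sum_const, Finset.sum_const, h0, hne]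
  simp

lemma core (K : Submodule (ZMod 2) (Fin 16 → ZMod 2))
    (h1 : ((fun _ => 1) : Fin 16 → ZMod 2) ∈ K)
    (hw : ∀ c ∈ K, c ≠ 0 → hammingNorm c = 8 ∨ hammingNorm c = 16) :
    Module.finrank (ZMod 2) K ≤ 5 ∧ ∃ e : Fin 16 ≃ (Fin 4 → ZMod 2), ∀ c ∈ K,
      ∃ (a : ZMod 2) (ℓ : (Fin 4 → ZMod 2) →ₗ[ZMod 2] ZMod 2),
        ∀ x : Fin 4 → ZMod 2, c (e.symm x) = a + ℓ x := by
  classical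
  set one : Fin 16 → ZMod 2 := fun _ => 1 with hone
  have hone0 : one ≠ 0 := by
    intro h
    exact one_ne_zero (congrFun h 0)
  have wt16 : ∀ f : Fin 16 → ZMod 2, hammingNorm f = 16 → f = one := by
    intro f hf
    funext i
    have huniv : Finset.univ.filter (fun i => f i ≠ 0) = Finset.univ := by
      apply Finset.eq_univ_of_card
      rw [← hammingNorm_eq_card, hf]
      simp
    have hi : f i ≠ 0 := by
      have : i ∈ Finset.univ.filter (fun i => f i ≠ 0) := by
        rw [huniv]; exact Finset.mem_univ i
      exact (Finset.mem_filter.mp this).2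
    have hx : ∀ x : ZMod 2, x ≠ 0 → x = 1 := by decide
    show f i = (1 : ZMod 2)
    exact hx _ hi
  have hw8 : ∀ c ∈ K, c ≠ 0 → c ≠ one → hammingNorm c = 8 := by
    intro c hc h0 hne
    rcases hw c hc h0 with h | h
    · exact h
    · exact absurd (wt16 c h) hne
  let u : K := ⟨one, h1⟩
  have hu0 : u ≠ 0 := fun h => hone0 (congrArg Subtype.val h)
  obtain ⟨W, hcompl⟩ := Submodule.exists_isCompl (Submodule.span (ZMod 2) {u})
  set m := Module.finrank (ZMod 2) W with hm
  have hrank : Module.finrank (ZMod 2) K = m + 1 := by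
    have h := Submodule.finrank_add_eq_of_isCompl hcompl
    rw [finrank_span_singleton hu0] at h
    omega
  let b : Module.Basis (Fin m) (ZMod 2) W := Module.finBasis (ZMod 2) W
  let f : W →ₗ[ZMod 2] (Fin 16 → ZMod 2) := K.subtype.comp W.subtype
  have hfmem : ∀ w : W, f w ∈ K := fun w => (W.subtype w).2
  have hfinj : Function.Injective f := by
    intro x y hxy
    exact Subtype.ext (Subtype.ext hxy)
  set φ : Fin 16 → V m := fun i j => f (b j) i with hφ
  have hcomb : ∀ l : V m, f (∑ j, l j • b j) = fun i => dot l (φ i) := by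
    intro l
    rw [map_sum]
    funext i
    rw [dot]
    simp only [map_smul]
    rw [Finset.sum_apply]
    refine Finset.sum_congr rfl fun j _ => ?_
    simp [hφ]
  have hbal : ∀ l : V m, l ≠ 0 → ∑ i : Fin 16, sgn (dot l (φ i)) = 0 := by
    intro l hl
    set wl : W := ∑ j, l j • b j with hwl
    have hwl0 : wl ≠ 0 := by
      intro h
      apply hl
      funext j
      exact Fintype.linearIndependent_iff.mp b.linearIndependent l h j
    have hcl : (fun i => dot l (φ i)) ∈ K := hcomb l ▸ hfmem wl
    have hcl0 : (fun i => dot l (φ i)) ≠ 0 := by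
      rw [← hcomb l]
      intro h
      exact hwl0 (hfinj (h.trans (map_zero f).symm))
    have hclone : (fun i => dot l (φ i)) ≠ one := by
      rw [← hcomb l]
      intro h
      have huW : u ∈ W := by
        have h' : W.subtype wl = u := Subtype.ext h
        exact h' ▸ wl.2
      have huspan : u ∈ Submodule.span (ZMod 2) {u} := Submodule.mem_span_singleton_self u
      exact hu0 ((Submodule.disjoint_def.mp hcompl.disjoint) u huspan huW)
    have h8 : hammingNorm (fun i => dot l (φ i)) = 8 := hw8 _ hcl hcl0 hclone
    exact sum_sgn_eq_zero _ h8
  have hfib := fiber_count φ hbal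
  have hm4 : m ≤ 4 := by
    have hdvd : 2 ^ m ∣ 16 := ⟨_, by rw [← hfib (φ 0)]; ring⟩
    have hle : 2 ^ m ≤ 2 ^ 4 := Nat.le_of_dvd (by norm_num) hdvd
    exact (Nat.pow_le_pow_iff_right (by norm_num)).mp hle
  refine ⟨by rw [hrank]; omega, ?_⟩
  set π : V 4 → V m := fun x j => x (Fin.castLE hm4 j) with hπ
  have hfibeq : ∀ v : V m, (Finset.univ.filter fun i => φ i = v).card
      = (Finset.univ.filter fun x : V 4 => π x = v).card := by
    intro v
    have h1' := hfib v
    have h2' := pi_fiber_count hm4 v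
    exact Nat.eq_of_mul_eq_mul_right (Nat.pow_pos (by norm_num : 0 < 2) : 0 < 2 ^ m)
      (h1'.trans h2'.symm)
  obtain ⟨e, he⟩ := equiv_of_fibers φ π hfibeq
  refine ⟨e, fun c hc => ?_⟩
  have hck : (⟨c, hc⟩ : K) ∈ Submodule.span (ZMod 2) {u} ⊔ W := by
    rw [hcompl.codisjoint.eq_top]; trivial
  obtain ⟨x, hx, y, hy, hxy⟩ := Submodule.mem_sup.mp hck
  obtain ⟨a, rfl⟩ := Submodule.mem_span_singleton.mp hx
  set yw : W := ⟨y, hy⟩ with hyw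
  set r : V m := fun j => b.repr yw j with hr
  have hyfun : (y : Fin 16 → ZMod 2) = fun i => dot r (φ i) := by
    have hs : (∑ j, r j • b j : W) = yw := b.sum_repr yw
    have := hcomb r
    rw [hs] at this
    exact this
  refine ⟨a, ∑ j : Fin m, r j • LinearMap.proj (R := ZMod 2) (Fin.castLE hm4 j), fun v => ?_⟩
  have hc_eq : c = a • one + (y : Fin 16 → ZMod 2) := by
    have := congrArg Subtype.val hxy
    exact this.symm
  have hφe : ∀ j, φ (e.symm v) j = v (Fin.castLE hm4 j) := by
    intro j
    have h1' := congrFun (he (e.symm v)) j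
    rw [Equiv.apply_symm_apply] at h1'
    exact h1'.symm
  rw [hc_eq]
  show a • one (e.symm v) + (y : Fin 16 → ZMod 2) (e.symm v) = _
  rw [hyfun]
  simp only [hone, smul_eq_mul, mul_one]
  congr 1
  show dot r (φ (e.symm v)) = _
  rw [LinearMap.sum_apply]
  rw [dot]
  refine Finset.sum_congr rfl fun j _ => ?_
  rw [hφe j]
  simp [LinearMap.proj_apply]

def P (ν : ℕ) : (Fin ν → ZMod 2) →ₗ[ZMod 2] (Fin 16 → ZMod 2) where
  toFun c := fun j => if h : (j : ℕ) < ν then c ⟨j, h⟩ else 0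
  map_add' c d := by funext j; by_cases h : (j : ℕ) < ν <;> simp [h]
  map_smul' a c := by funext j; by_cases h : (j : ℕ) < ν <;> simp [h]

lemma P_castLE {ν : ℕ} (hν : ν ≤ 16) (c : Fin ν → ZMod 2) (i : Fin ν) :
    P ν c (Fin.castLE hν i) = c i := by
  show (if h : ((Fin.castLE hν i : Fin 16) : ℕ) < ν then c ⟨_, h⟩ else 0) = c i
  rw [dif_pos (by simpa using i.isLt)]
  congr 1

lemma P_inj {ν : ℕ} (hν : ν ≤ 16) : Function.Injective (P ν) := by
  intro c d h
  funext i
  have := congrFun h (Fin.castLE hν i)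
  rwa [P_castLE hν, P_castLE hν] at this

lemma P_norm' {ν : ℕ} (hν : ν ≤ 16) (c : Fin ν → ZMod 2) :
    hammingNorm (P ν c) = hammingNorm c := by
  rw [hammingNorm_eq_card, hammingNorm_eq_card]
  symm
  apply Finset.card_bij (fun (i : Fin ν) _ => Fin.castLE hν i)
  · intro i hi
    simp only [Finset.mem_filter, Finset.mem_univ, true_and] at hi ⊢
    rwa [P_castLE hν]
  · intro i _ i' _ h
    exact Fin.castLE_injective hν h
  · intro j hj
    simp only [Finset.mem_filter, Finset.mem_univ, true_and] at hj
    have hjν : (j : ℕ) < ν := by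
      by_contra h
      exact hj (dif_neg h)
    refine ⟨⟨(j : ℕ), hjν⟩, ?_, ?_⟩
    · simp only [Finset.mem_filter, Finset.mem_univ, true_and]
      have : P ν c j = c ⟨(j : ℕ), hjν⟩ := dif_pos hjν
      rwa [this] at hj
    · exact Fin.ext rfl

lemma add_one_norm (f : Fin 16 → ZMod 2) :
    hammingNorm (f + fun _ => 1) + hammingNorm f = 16 := by
  classical
  set one : Fin 16 → ZMod 2 := fun _ => 1 with hone
  have h1 : ∀ x : ZMod 2, (x + 1 ≠ 0 ↔ x = 0) := by decide
  have h2 : (Finset.univ.filter fun i : Fin 16 => (f + one) i ≠ 0)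
      = Finset.univ.filter fun i => f i = 0 := by
    apply Finset.filter_congr
    intro i _
    exact h1 (f i)
  rw [hammingNorm_eq_card, hammingNorm_eq_card, h2]
  have := Finset.card_filter_add_card_filter_not
    (s := (Finset.univ : Finset (Fin 16))) (p := fun i => f i = 0)
  simp only [Finset.card_univ, Fintype.card_fin] at this
  simp only [ne_eq, Finset.filter_congr_decidable] at this ⊢
  omega


end Stmt5Aux

open Stmt5Aux in
/-- A binary linear code `K ⊆ 𝔽_2^ν` with `ν ≤ 16` and all nonzero weights in `{8, 16}`
has dimension at most `5`.  Moreover, if `K` contains the all-ones vector and this has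
weight `16`, then `ν = 16` and there is a bijection of the coordinates with `𝔽_2^4`
under which every codeword of `K` is (the vector of values of) an affine function
`𝔽_2^4 → 𝔽_2`, i.e. `K` is contained in the first-order Reed–Muller (Kummer) code. -/
theorem stmt5 (ν : ℕ) (hν : ν ≤ 16) (K : Submodule (ZMod 2) (Fin ν → ZMod 2))
    (hw : ∀ c ∈ K, c ≠ 0 → hammingNorm c = 8 ∨ hammingNorm c = 16) :
    Module.finrank (ZMod 2) K ≤ 5 ∧
      (((fun _ => 1) : Fin ν → ZMod 2) ∈ K →
        hammingNorm ((fun _ => 1) : Fin ν → ZMod 2) = 16 →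
        ν = 16 ∧ ∃ e : Fin ν ≃ (Fin 4 → ZMod 2), ∀ c ∈ K,
          ∃ (a : ZMod 2) (ℓ : (Fin 4 → ZMod 2) →ₗ[ZMod 2] ZMod 2),
            ∀ x : Fin 4 → ZMod 2, c (e.symm x) = a + ℓ x) := by
  classical
  constructor
  · -- dimension bound via padding
    set L := (K.map (P ν)) ⊔ Submodule.span (ZMod 2) {((fun _ => 1) : Fin 16 → ZMod 2)} with hL
    have h1L : ((fun _ => 1) : Fin 16 → ZMod 2) ∈ L :=
      Submodule.mem_sup_right (Submodule.mem_span_singleton_self _)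
    have hwL : ∀ c' ∈ L, c' ≠ 0 → hammingNorm c' = 8 ∨ hammingNorm c' = 16 := by
      intro c' hc' h0
      rw [hL, Submodule.mem_sup] at hc'
      obtain ⟨y, hy, z, hz, rfl⟩ := hc'
      obtain ⟨c, hcK, rfl⟩ := Submodule.mem_map.mp hy
      obtain ⟨a, rfl⟩ := Submodule.mem_span_singleton.mp hz
      have ha : ∀ x : ZMod 2, x = 0 ∨ x = 1 := by decide
      rcases ha a with rfl | rfl
      · rw [zero_smul, add_zero] at h0 ⊢
        have hc0 : c ≠ 0 := fun h => h0 (by rw [h, map_zero])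
        rw [P_norm' hν]
        exact hw c hcK hc0
      · rw [one_smul] at h0 ⊢
        by_cases hc0 : c = 0
        · subst hc0
          rw [map_zero, zero_add]
          right
          rw [hammingNorm_eq_card]
          have : (Finset.univ.filter fun i : Fin 16 => (1 : ZMod 2) ≠ 0) = Finset.univ := by
            apply Finset.filter_true_of_mem
            intro i _
            decide
          rw [this]
          simp
        · rcases hw c hcK hc0 with h8 | h16
          · left
            have h1 := add_one_norm (P ν c)
            rw [P_norm' hν, h8] at h1
            omega
          · exfalso
            apply h0
            have hle : 16 ≤ ν := by
              have := hammingNorm_le_card_fintype (x := c)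
              simp only [Fintype.card_fin] at this
              omega
            have hν16 : ν = 16 := le_antisymm hν hle
            subst hν16
            have hcone : c = fun _ => 1 := by
              funext i
              have huniv : Finset.univ.filter (fun i => c i ≠ 0) = Finset.univ := by
                apply Finset.eq_univ_of_card
                rw [← hammingNorm_eq_card, h16]
                simp
              have hi : c i ≠ 0 := by
                have : i ∈ Finset.univ.filter (fun i => c i ≠ 0) := by
                  rw [huniv]; exact Finset.mem_univ i
                exact (Finset.mem_filter.mp this).2
              have hx : ∀ x : ZMod 2, x ≠ 0 → x = 1 := by decide
              exact hx _ hi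
            have hP : P 16 c = fun _ => 1 := by
              funext j
              show (if h : (j : ℕ) < 16 then c ⟨_, h⟩ else 0) = 1
              rw [dif_pos j.isLt, hcone]
            rw [hP]
            funext j
            show (1 : ZMod 2) + 1 = 0
            decide
    have hcore := core L h1L hwL
    have he1 : Module.finrank (ZMod 2) K = Module.finrank (ZMod 2) (K.map (P ν)) :=
      (Submodule.equivMapOfInjective (P ν) (P_inj hν) K).finrank_eq
    have he2 : Module.finrank (ZMod 2) (K.map (P ν)) ≤ Module.finrank (ZMod 2) L :=
      Submodule.finrank_mono le_sup_left
    omega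
  · intro hone hnorm
    have hνν : hammingNorm ((fun _ => 1) : Fin ν → ZMod 2) = ν := by
      rw [hammingNorm_eq_card]
      have : (Finset.univ.filter fun i : Fin ν => (1 : ZMod 2) ≠ 0) = Finset.univ := by
        apply Finset.filter_true_of_mem
        intro i _
        decide
      rw [this]
      simp
    have hν16 : ν = 16 := by omega
    subst hν16
    exact ⟨rfl, (core K hone hw).2⟩
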